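/- Let I = (𝔼, D, c, f) be a CMP instance whose objective f is of type product, and let E = {e_1,…,e_k} ⊆ 𝔼. Then ( (min_{l=1,…,k} { u'(I,e_l)/c(e_l) } + 1)^{1/k} − 1 ) · min_{l=1,…,k} c(e_l) ≤ u_b'(I,E). -/

import Mathlib

open scoped ENNReal BigOperators

/-- Objective type of a combinatorial minimization problem:
sum, product, or bottleneck. -/
inductive ObjType where
  | sum : ObjType
  | prod : ObjType
  | bottleneck : ObjType
deriving DecidableEq

/-- The cost `f_c(S)` of a feasible solution `S` under cost function `c`:
the sum, the product, or the maximum (for nonempty `S`) of the element costs. -/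
noncomputable def objCost {ι : Type*} (t : ObjType) (c : ι → ℝ) (S : Finset ι) : ℝ :=
  match t with
  | ObjType.sum => ∑ e ∈ S, c e
  | ObjType.prod => ∏ e ∈ S, c e
  | ObjType.bottleneck => if h : S.Nonempty then S.sup' h c else 0

/-- The optimal objective value `f(I)` of the instance with feasible set `D`. -/
noncomputable def optVal {ι : Type*} (t : ObjType) (c : ι → ℝ) (D : Finset (Finset ι)) : ℝ :=
  if h : D.Nonempty then D.inf' h (objCost t c) else 0

/-- `S` is an optimal solution of the instance `(𝔼, D, c, f)`. -/
def isOpt {ι : Type*} (t : ObjType) (c : ι → ℝ) (D : Finset (Finset ι)) (S : Finset ι) : Prop :=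
  S ∈ D ∧ objCost t c S = optVal t c D

/-- `0 ≤ a < maxdec(e)`, where `maxdec(e) = ∞` for sum/bottleneck objectives and
`maxdec(e) = c(e)` for the product objective. -/
def decOK {ι : Type*} (t : ObjType) (c : ι → ℝ) (e : ι) (a : ℝ) : Prop :=
  0 ≤ a ∧ (t = ObjType.prod → a < c e)

/-- Extended single upper tolerance
`u'(I,e) = sup {α ≥ 0 : every optimal solution of I is optimal for I_{α,e}}` valued in `[0,∞]`. -/
noncomputable def uTol {ι : Type*} [DecidableEq ι] (t : ObjType) (c : ι → ℝ)
    (D : Finset (Finset ι)) (e : ι) : ℝ≥0∞ :=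
  sSup (ENNReal.ofReal '' {a : ℝ | 0 ≤ a ∧
    ∀ S : Finset ι, isOpt t c D S →
      isOpt t (fun x => if x = e then c x + a else c x) D S})

/-- Extended regular set upper tolerance `u'(I,E)`, valued in `[0,∞]`. -/
noncomputable def uTolSet {ι : Type*} [DecidableEq ι] (t : ObjType) (c : ι → ℝ)
    (D : Finset (Finset ι)) (E : Finset ι) : ℝ≥0∞ :=
  sSup (ENNReal.ofReal '' {a : ℝ |
    ∀ S : Finset ι, isOpt t c D S →
      ∃ α : ι → ℝ, (∀ x, 0 ≤ α x) ∧ (∀ x ∉ E, α x = 0) ∧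
        a = ∑ x ∈ E, α x ∧ isOpt t (fun x => c x + α x) D S})

/-- Extended reverse set upper tolerance `u_b'(I,E)`, valued in `[0,∞]` (`inf ∅ = ∞`). -/
noncomputable def uTolSetRev {ι : Type*} [DecidableEq ι] (t : ObjType) (c : ι → ℝ)
    (D : Finset (Finset ι)) (E : Finset ι) : ℝ≥0∞ :=
  sInf (ENNReal.ofReal '' {a : ℝ |
    ∃ S : Finset ι, isOpt t c D S ∧
      ∃ α : ι → ℝ, (∀ x, 0 ≤ α x) ∧ (∀ x ∉ E, α x = 0) ∧
        a = ∑ x ∈ E, α x ∧ ¬ isOpt t (fun x => c x + α x) D S})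

/-- New single lower tolerance
`l'(I,e) = sup {α : 0 ≤ α < maxdec(e), f(I_{−α,e}) = f(I)}`, valued in `[0,∞]`. -/
noncomputable def lTol {ι : Type*} [DecidableEq ι] (t : ObjType) (c : ι → ℝ)
    (D : Finset (Finset ι)) (e : ι) : ℝ≥0∞ :=
  sSup (ENNReal.ofReal '' {a : ℝ | decOK t c e a ∧
    optVal t (fun x => if x = e then c x - a else c x) D = optVal t c D})

/-- New regular set lower tolerance `l'(I,E)`, valued in `[0,∞]`. -/
noncomputable def lTolSet {ι : Type*} [DecidableEq ι] (t : ObjType) (c : ι → ℝ)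
    (D : Finset (Finset ι)) (E : Finset ι) : ℝ≥0∞ :=
  sSup (ENNReal.ofReal '' {a : ℝ |
    ∃ α : ι → ℝ, (∀ x ∈ E, decOK t c x (α x)) ∧ (∀ x ∉ E, α x = 0) ∧
      a = ∑ x ∈ E, α x ∧ optVal t (fun x => c x - α x) D = optVal t c D})

/-- New reverse set lower tolerance `l_b'(I,E)`, valued in `[0,∞]` (`inf ∅ = ∞`). -/
noncomputable def lTolSetRev {ι : Type*} [DecidableEq ι] (t : ObjType) (c : ι → ℝ)
    (D : Finset (Finset ι)) (E : Finset ι) : ℝ≥0∞ :=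
  sInf (ENNReal.ofReal '' {a : ℝ |
    ∃ α : ι → ℝ, (∀ x ∈ E, decOK t c x (α x)) ∧ (∀ x ∉ E, α x = 0) ∧
      a = ∑ x ∈ E, α x ∧ optVal t (fun x => c x - α x) D < optVal t c D})


/-- Theorem (reverse set upper tolerance, product case):
`((min_l {u'(I,e_l)/c(e_l)} + 1)^{1/k} − 1) · min_l c(e_l) ≤ u_b'(I,E)`,
with arithmetic in `[0,∞]`. -/
theorem urv_prod_lower_bound {ι : Type*} [Fintype ι] [DecidableEq ι]
    (c : ι → ℝ) (D : Finset (Finset ι))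
    (hD : D.Nonempty) (hSne : ∀ S ∈ D, S.Nonempty)
    (hpos : ∀ x, 0 < c x)
    (E : Finset ι) (hE : E.Nonempty) :
    (((E.inf fun e => uTol ObjType.prod c D e / ENNReal.ofReal (c e)) + 1)
        ^ (1 / (E.card : ℝ)) - 1) * (E.inf fun e => ENNReal.ofReal (c e))
      ≤ uTolSetRev ObjType.prod c D E := by
  classical
  refine le_sInf ?_
  rintro b ⟨a, ⟨S₀, hS₀, α, hα0, hαs, rfl, hnot⟩, rfl⟩
  by_contra hcon
  rw [not_le] at hcon
  -- notation
  set k := E.card with hk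
  have hkpos : 0 < k := Finset.card_pos.mpr hE
  set a := ∑ x ∈ E, α x with ha_def
  have ha : 0 ≤ a := Finset.sum_nonneg fun x _ => hα0 x
  have hαlea : ∀ x ∈ E, α x ≤ a := fun x hx =>
    Finset.single_le_sum (fun y _ => hα0 y) hx
  -- minimal cost element
  obtain ⟨em, hem, hmin⟩ := Finset.exists_mem_eq_inf E hE (fun e => ENNReal.ofReal (c e))
  set cm := c em with hcm_def
  have hcm : 0 < cm := hpos em
  have hcmle : ∀ e ∈ E, cm ≤ c e := by
    intro e he
    have h := Finset.inf_le (f := fun e => ENNReal.ofReal (c e)) he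
    rw [hmin] at h
    exact (ENNReal.ofReal_le_ofReal_iff (hpos e).le).mp h
  -- real-side constant
  set q : ℝ := a / cm + 1 with hq_def
  have hq1 : 1 ≤ q := le_add_of_nonneg_left (div_nonneg ha hcm.le)
  have hq0 : 0 < q := lt_of_lt_of_le one_pos hq1
  set P : ℝ := q ^ k with hP_def
  have hP1 : 1 ≤ P := one_le_pow₀ hq1
  -- ENNReal chain : ofReal P < M + 1
  set M := E.inf fun e => uTol ObjType.prod c D e / ENNReal.ofReal (c e) with hM
  rw [hmin] at hcon
  have hkR : (0:ℝ) < (k:ℝ) := by exact_mod_cast hkpos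
  clear_value k a cm q P M
  have hcm0 : ENNReal.ofReal cm ≠ 0 := by simp [ENNReal.ofReal_pos, hcm]
  have hcmt : ENNReal.ofReal cm ≠ ⊤ := ENNReal.ofReal_ne_top
  have hX1 : 1 ≤ (M + 1) ^ (1 / (k : ℝ)) := by
    have : ((1 : ℝ≥0∞)) ^ (1 / (k : ℝ)) ≤ (M + 1) ^ (1 / (k : ℝ)) :=
      ENNReal.rpow_le_rpow le_add_self (by positivity)
    simpa using this
  have hdiv : ENNReal.ofReal a / ENNReal.ofReal cm < (M + 1) ^ (1 / (k : ℝ)) - 1 :=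
    (ENNReal.div_lt_iff (Or.inl hcm0) (Or.inl hcmt)).mpr hcon
  have hQlt : ENNReal.ofReal a / ENNReal.ofReal cm + 1 < (M + 1) ^ (1 / (k : ℝ)) := by
    have := (ENNReal.add_lt_add_iff_right (a := 1) ENNReal.one_ne_top).mpr hdiv
    rwa [tsub_add_cancel_of_le hX1] at this
  have hQof : ENNReal.ofReal a / ENNReal.ofReal cm + 1 = ENNReal.ofReal q := by
    rw [hq_def, ENNReal.ofReal_add (div_nonneg ha hcm.le) zero_le_one,
      ENNReal.ofReal_div_of_pos hcm, ENNReal.ofReal_one]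
  have hPM : ENNReal.ofReal P < M + 1 := by
    have h1 : (ENNReal.ofReal q) ^ (k : ℝ) < ((M + 1) ^ (1 / (k : ℝ))) ^ (k : ℝ) :=
      ENNReal.rpow_lt_rpow (hQof ▸ hQlt) hkR
    have h2 : ((M + 1) ^ (1 / (k : ℝ))) ^ (k : ℝ) = M + 1 := by
      rw [← ENNReal.rpow_mul, one_div_mul_cancel hkR.ne',
        ENNReal.rpow_one]
    have h3 : (ENNReal.ofReal q) ^ (k : ℝ) = ENNReal.ofReal P := by
      rw [ENNReal.ofReal_rpow_of_pos hq0, hP_def, Real.rpow_natCast]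
    rw [h2, h3] at h1
    exact h1
  -- key: for each e ∈ E, ofReal (c e * (P - 1)) < uTol e
  have hkey : ∀ e ∈ E, ENNReal.ofReal (c e * (P - 1)) < uTol ObjType.prod c D e := by
    intro e he
    have hMe : M ≤ uTol ObjType.prod c D e / ENNReal.ofReal (c e) := by
      rw [hM]; exact Finset.inf_le he
    have h1 : ENNReal.ofReal P < uTol ObjType.prod c D e / ENNReal.ofReal (c e) + 1 :=
      hPM.trans_le (add_le_add_left hMe 1)
    have h2 : ENNReal.ofReal (P - 1) < uTol ObjType.prod c D e / ENNReal.ofReal (c e) := by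
      have heq : ENNReal.ofReal (P - 1) + 1 = ENNReal.ofReal P := by
        rw [← ENNReal.ofReal_one, ← ENNReal.ofReal_add (by linarith) zero_le_one]
        ring_nf
      rw [← ENNReal.add_lt_add_iff_right (a := 1) ENNReal.one_ne_top, heq]
      exact h1
    have h3 : ENNReal.ofReal (P - 1) * ENNReal.ofReal (c e) < uTol ObjType.prod c D e :=
      (ENNReal.lt_div_iff_mul_lt (Or.inl (by simp [ENNReal.ofReal_pos, hpos e]))
        (Or.inl ENNReal.ofReal_ne_top)).mp h2
    rwa [mul_comm (c e) (P - 1), ENNReal.ofReal_mul (by linarith)]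
  -- original optimality of S₀ : pointwise comparison
  have hbase : ∀ S ∈ D, (∏ x ∈ S₀, c x) ≤ ∏ x ∈ S, c x := by
    intro S hS
    have h : optVal ObjType.prod c D ≤ objCost ObjType.prod c S := by
      rw [optVal, dif_pos hD]
      exact Finset.inf'_le _ hS
    have h2 := hS₀.2
    simp only [objCost] at h h2
    rw [← h2] at h
    exact h
  have hprodc : ∀ W : Finset ι, 0 < ∏ x ∈ W, c x :=
    fun W => Finset.prod_pos fun x _ => hpos x
  have hprodf : ∀ W : Finset ι, 0 < ∏ x ∈ W, (c x + α x) :=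
    fun W => Finset.prod_pos fun x _ => by have := hα0 x; have := hpos x; linarith
  -- S₀ stays optimal for the perturbed costs
  apply hnot
  refine ⟨hS₀.1, ?_⟩
  rw [optVal, dif_pos hD]
  refine le_antisymm ?_ (Finset.inf'_le _ hS₀.1)
  refine Finset.le_inf' _ _ ?_
  intro S hS
  show (∏ x ∈ S₀, (c x + α x)) ≤ ∏ x ∈ S, (c x + α x)
  rw [← Finset.prod_inter_mul_prod_diff S₀ S, ← Finset.prod_inter_mul_prod_diff S S₀,
    Finset.inter_comm S S₀]
  refine mul_le_mul_of_nonneg_left ?_ (hprodf _).le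
  -- reduce to : Π_{S₀\S} (c+α) ≤ Π_{S\S₀} c
  have hUc : (∏ x ∈ S \ S₀, c x) ≤ ∏ x ∈ S \ S₀, (c x + α x) :=
    Finset.prod_le_prod (fun x _ => (hpos x).le) (fun x _ => le_add_of_nonneg_right (hα0 x))
  refine le_trans ?_ hUc
  -- cancel Π_{S₀∩S} c from the base inequality
  have hcancel : (∏ x ∈ S₀ \ S, c x) ≤ ∏ x ∈ S \ S₀, c x := by
    have h := hbase S hS
    rw [← Finset.prod_inter_mul_prod_diff S₀ S (f := c),
      ← Finset.prod_inter_mul_prod_diff S S₀ (f := c), Finset.inter_comm S S₀] at h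
    exact le_of_mul_le_mul_left h (hprodc _)
  by_cases hTE : ((S₀ \ S) ∩ E).Nonempty
  · -- main case: some element of E increased within S₀ \ S
    obtain ⟨e₀, he₀⟩ := hTE
    have he₀T : e₀ ∈ S₀ \ S := Finset.mem_of_mem_inter_left he₀
    have he₀E : e₀ ∈ E := Finset.mem_of_mem_inter_right he₀
    have he₀S₀ : e₀ ∈ S₀ := (Finset.mem_sdiff.mp he₀T).1
    have he₀S : e₀ ∉ S := (Finset.mem_sdiff.mp he₀T).2
    -- extract a good β for e₀
    have hlt := hkey e₀ he₀E
    rw [uTol] at hlt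
    obtain ⟨y, hymem, hy⟩ := lt_sSup_iff.mp hlt
    obtain ⟨β, hβG, rfl⟩ := hymem
    have hβ0 : 0 ≤ β := hβG.1
    have hβreal : c e₀ * (P - 1) < β :=
      (ENNReal.ofReal_lt_ofReal_iff_of_nonneg
        (mul_nonneg (hpos e₀).le (by linarith))).mp hy
    have hoptβ := hβG.2 S₀ hS₀
    have hβle : (∏ x ∈ S₀, (if x = e₀ then c x + β else c x)) ≤
        ∏ x ∈ S, (if x = e₀ then c x + β else c x) := by
      have h : optVal ObjType.prod (fun x => if x = e₀ then c x + β else c x) D ≤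
          objCost ObjType.prod (fun x => if x = e₀ then c x + β else c x) S := by
        rw [optVal, dif_pos hD]
        exact Finset.inf'_le _ hS
      have h2 := hoptβ.2
      simp only [objCost] at h h2
      rw [← h2] at h
      exact h
    have hSc : (∏ x ∈ S, (if x = e₀ then c x + β else c x)) = ∏ x ∈ S, c x :=
      Finset.prod_congr rfl fun x hx => if_neg (by rintro rfl; exact he₀S hx)
    have hS₀c : (∏ x ∈ S₀, (if x = e₀ then c x + β else c x)) =
        (c e₀ + β) * ∏ x ∈ S₀.erase e₀, c x := by
      rw [← Finset.mul_prod_erase S₀ _ he₀S₀, if_pos rfl]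
      congr 1
      exact Finset.prod_congr rfl fun x hx => if_neg (Finset.ne_of_mem_erase hx)
    have hβineq : (c e₀ + β) * (∏ x ∈ S₀.erase e₀, c x) ≤ ∏ x ∈ S, c x := by
      rw [← hS₀c, ← hSc]; exact hβle
    -- bound the perturbed product over S₀ \ S by P * (product of c)
    have hfle : ∀ x ∈ (S₀ \ S) ∩ E, c x + α x ≤ c x * q := by
      intro x hx
      have hxE : x ∈ E := Finset.mem_of_mem_inter_right hx
      have h1 : α x ≤ a := hαlea x hxE
      have h2 : cm ≤ c x := hcmle x hxE
      have h3 : a ≤ c x * (a / cm) := by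
        rw [mul_div_assoc']
        rw [le_div_iff₀ hcm]
        nlinarith
      have : c x * q = c x + c x * (a / cm) := by rw [hq_def]; ring
      linarith
    have hbound : (∏ x ∈ (S₀ \ S) ∩ E, (c x + α x)) ≤
        (∏ x ∈ (S₀ \ S) ∩ E, c x) * P := by
      calc (∏ x ∈ (S₀ \ S) ∩ E, (c x + α x))
          ≤ ∏ x ∈ (S₀ \ S) ∩ E, (c x * q) := by
            refine Finset.prod_le_prod (fun x hx => ?_) hfle
            have := hα0 x; have := hpos x; linarith
        _ = (∏ x ∈ (S₀ \ S) ∩ E, c x) * q ^ ((S₀ \ S) ∩ E).card := by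
            rw [Finset.prod_mul_distrib, Finset.prod_const]
        _ ≤ (∏ x ∈ (S₀ \ S) ∩ E, c x) * P := by
            refine mul_le_mul_of_nonneg_left ?_ (hprodc _).le
            rw [hP_def]
            refine pow_le_pow_right₀ hq1 ?_
            rw [hk]
            exact Finset.card_le_card Finset.inter_subset_right
    have hsplitf : (∏ x ∈ S₀ \ S, (c x + α x)) =
        (∏ x ∈ (S₀ \ S) ∩ E, (c x + α x)) * ∏ x ∈ (S₀ \ S) \ E, c x := by
      rw [← Finset.prod_inter_mul_prod_diff (S₀ \ S) E]
      congr 1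
      exact Finset.prod_congr rfl fun x hx => by
        rw [hαs x (Finset.mem_sdiff.mp hx).2, add_zero]
    have hsplitc : (∏ x ∈ (S₀ \ S) ∩ E, c x) * (∏ x ∈ (S₀ \ S) \ E, c x) =
        ∏ x ∈ S₀ \ S, c x := Finset.prod_inter_mul_prod_diff _ _ _
    -- main chain
    have hfinal : (∏ x ∈ S₀ \ S, (c x + α x)) ≤ P * ∏ x ∈ S₀ \ S, c x := by
      rw [hsplitf]
      calc (∏ x ∈ (S₀ \ S) ∩ E, (c x + α x)) * ∏ x ∈ (S₀ \ S) \ E, c x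
          ≤ ((∏ x ∈ (S₀ \ S) ∩ E, c x) * P) * ∏ x ∈ (S₀ \ S) \ E, c x :=
            mul_le_mul_of_nonneg_right hbound (hprodc _).le
        _ = P * ((∏ x ∈ (S₀ \ S) ∩ E, c x) * ∏ x ∈ (S₀ \ S) \ E, c x) := by ring
        _ = P * ∏ x ∈ S₀ \ S, c x := by rw [hsplitc]
    refine hfinal.trans ?_
    -- show P * Π_{S₀\S} c ≤ Π_{S\S₀} c by cancelling Π_{S₀∩S} c
    have hVpos := hprodc (S₀ ∩ S)
    refine le_of_mul_le_mul_left ?_ hVpos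
    have hL : (∏ x ∈ S₀ ∩ S, c x) * (P * ∏ x ∈ S₀ \ S, c x) = P * ∏ x ∈ S₀, c x := by
      rw [← Finset.prod_inter_mul_prod_diff S₀ S (f := c)]; ring
    have hR : (∏ x ∈ S₀ ∩ S, c x) * ∏ x ∈ S \ S₀, c x = ∏ x ∈ S, c x := by
      rw [← Finset.prod_inter_mul_prod_diff S S₀ (f := c), Finset.inter_comm S S₀]
    rw [hL, hR]
    have hS₀e : (∏ x ∈ S₀, c x) = c e₀ * ∏ x ∈ S₀.erase e₀, c x :=
      (Finset.mul_prod_erase S₀ c he₀S₀).symm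
    have hPc : P * c e₀ ≤ c e₀ + β := by nlinarith
    calc P * ∏ x ∈ S₀, c x = (P * c e₀) * ∏ x ∈ S₀.erase e₀, c x := by
          rw [hS₀e]; ring
      _ ≤ (c e₀ + β) * ∏ x ∈ S₀.erase e₀, c x :=
          mul_le_mul_of_nonneg_right hPc (hprodc _).le
      _ ≤ ∏ x ∈ S, c x := hβineq
  · -- degenerate case: no element of E in S₀ \ S
    have hTE' : (S₀ \ S) ∩ E = ∅ := Finset.not_nonempty_iff_eq_empty.mp hTE
    have : (∏ x ∈ S₀ \ S, (c x + α x)) = ∏ x ∈ S₀ \ S, c x := by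
      refine Finset.prod_congr rfl fun x hx => ?_
      have hxE : x ∉ E := fun hxE =>
        (Finset.eq_empty_iff_forall_notMem.mp hTE' x) (Finset.mem_inter.mpr ⟨hx, hxE⟩)
      rw [hαs x hxE, add_zero]
    rw [this]
    exact hcancel
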